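/- Let n ≥ 5 be odd and let P_odd be the pot over bond-edge types a_1, …, a_{⌊n/2⌋+1} consisting of the ⌊n/2⌋+2 tiles t_1 = {a_1^{n-1}}, t_2 = {â_1, a_2, a_2}, t_i = {â_1, â_{i-1}, a_i} for 3 ≤ i ≤ ⌊n/2⌋+1, and t_{⌊n/2⌋+2} = {â_1, â_{⌊n/2⌋+1}, â_{⌊n/2⌋+1}}. Then the construction matrix M(P_odd) has the unique solution (1/n, 1/n, 2/n, …, 2/n, 1/n), where the entry 2/n occurs in coordinates 3 through ⌊n/2⌋+1, and consequently m_{P_odd} = n. -/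

import Mathlib

/-!
Basic framework for flexible-tile DNA self-assembly.

Bond-edge types are elements of `Fin m`.  A cohesive end is either unhatted
(`Sum.inl a`) or hatted (`Sum.inr a`).  A tile is a finite multiset of cohesive
ends, and a pot is a finite set of tiles.
-/

/-- A tile over the bond-edge alphabet `Fin m`. -/
abbrev Tile (m : ℕ) : Type := Multiset (Fin m ⊕ Fin m)

/-- A pot: a finite set of tiles over the alphabet `Fin m`. -/
abbrev Pot (m : ℕ) : Type := Finset (Tile m)

/-- A finite multigraph (nonempty finite vertex set, finite edge set; loops and
parallel edges allowed), edges recorded by their unordered pair of endpoints. -/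
structure Multigraph where
  V : Type
  E : Type
  [fintypeV : Fintype V]
  [decEqV : DecidableEq V]
  [nonemptyV : Nonempty V]
  [fintypeE : Fintype E]
  ends : E → Sym2 V

attribute [instance] Multigraph.fintypeV Multigraph.decEqV
  Multigraph.nonemptyV Multigraph.fintypeE

/-- The order (number of vertices) of a multigraph. -/
def Multigraph.order (G : Multigraph) : ℕ := Fintype.card G.V

/-- An assembly of `G` from tiles over `Fin m`: each edge gets an orientation
(an ordered pair of vertices compatible with its endpoints) and a bond-edge type. -/
structure Assembly (m : ℕ) (G : Multigraph) where
  orient : G.E → G.V × G.V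
  label : G.E → Fin m
  orient_ends : ∀ e : G.E, G.ends e = s((orient e).1, (orient e).2)

/-- The tile of a vertex `v` under an assembly: one unhatted `a` for each edge
labeled `a` oriented out of `v`, one hatted `a` for each edge labeled `a`
oriented into `v`. -/
def Assembly.tileOf {m : ℕ} {G : Multigraph} (A : Assembly m G) (v : G.V) : Tile m :=
  (Finset.univ : Finset G.E).val.bind fun e =>
    (if (A.orient e).1 = v then {Sum.inl (A.label e)} else 0) +
    (if (A.orient e).2 = v then {Sum.inr (A.label e)} else 0)

/-- `G` is realized by the pot `P`: there is an assembly of `G` all of whose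
vertex tiles belong to `P`. -/
def Realizes {m : ℕ} (P : Pot m) (G : Multigraph) : Prop :=
  ∃ A : Assembly m G, ∀ v : G.V, A.tileOf v ∈ P

/-- `C(P)`: the class of multigraphs realized by `P`. -/
def CSet {m : ℕ} (P : Pot m) : Set Multigraph := {G | Realizes P G}

/-- `m_P`: the minimum order of a multigraph realized by `P`. -/
noncomputable def mP {m : ℕ} (P : Pot m) : ℕ :=
  sInf {n | ∃ G ∈ CSet P, G.order = n}

/-- `C_min(P)`: the multigraphs realized by `P` of minimum order. -/
def Cmin {m : ℕ} (P : Pot m) : Set Multigraph :=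
  {G ∈ CSet P | G.order = mP P}

/-- An isomorphism of multigraphs. -/
structure MultigraphIso (G H : Multigraph) where
  vEquiv : G.V ≃ H.V
  eEquiv : G.E ≃ H.E
  ends_eq : ∀ e : G.E, H.ends (eEquiv e) = (G.ends e).map vEquiv

/-- Two multigraphs are isomorphic. -/
def Isomorphic (G H : Multigraph) : Prop := Nonempty (MultigraphIso G H)

/-- Scenario 1: minimum number of tile types over all pots realizing `G`. -/
noncomputable def T1 (G : Multigraph) : ℕ :=
  sInf {c | ∃ m : ℕ, ∃ P : Pot m, Realizes P G ∧ P.card = c}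

/-- Scenario 1: minimum number of bond-edge types over all pots realizing `G`. -/
noncomputable def B1 (G : Multigraph) : ℕ :=
  sInf {m | ∃ P : Pot m, Realizes P G}

/-- Scenario 2: minimum number of tile types over pots `P` with `G ∈ C(P)` and
`m_P = |V(G)|`. -/
noncomputable def T2 (G : Multigraph) : ℕ :=
  sInf {c | ∃ m : ℕ, ∃ P : Pot m, Realizes P G ∧ mP P = G.order ∧ P.card = c}

/-- Scenario 2: minimum number of bond-edge types over pots `P` with `G ∈ C(P)`
and `m_P = |V(G)|`. -/
noncomputable def B2 (G : Multigraph) : ℕ :=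
  sInf {m | ∃ P : Pot m, Realizes P G ∧ mP P = G.order}

/-- Scenario 3: minimum number of tile types over pots `P` with `C_min(P)`
consisting exactly of the multigraphs isomorphic to `G`. -/
noncomputable def T3 (G : Multigraph) : ℕ :=
  sInf {c | ∃ m : ℕ, ∃ P : Pot m, Cmin P = {H | Isomorphic H G} ∧ P.card = c}

/-- Scenario 3: minimum number of bond-edge types over pots `P` with `C_min(P)`
consisting exactly of the multigraphs isomorphic to `G`. -/
noncomputable def B3 (G : Multigraph) : ℕ :=
  sInf {m | ∃ P : Pot m, Cmin P = {H | Isomorphic H G}}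

/-- The degree of a vertex (a loop contributes 2). -/
def Multigraph.degree (G : Multigraph) (v : G.V) : ℕ :=
  ∑ e : G.E, (if v ∈ G.ends e then (if (G.ends e).IsDiag then 2 else 1) else 0)

/-- `av(G)`: the number of distinct vertex degrees in `G`. -/
def av (G : Multigraph) : ℕ := (Finset.univ.image G.degree).card

/-- `ev(G)`: the number of distinct even vertex degrees in `G`. -/
def ev (G : Multigraph) : ℕ :=
  ((Finset.univ.image G.degree).filter (fun d => Even d)).card

/-- `ov(G)`: the number of distinct odd vertex degrees in `G`. -/
def ov (G : Multigraph) : ℕ :=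
  ((Finset.univ.image G.degree).filter (fun d => Odd d)).card

/-- `z i t`: the net number of cohesive ends of type `i` on tile `t`
(unhatted count minus hatted count). -/
def zval {m : ℕ} (i : Fin m) (t : Tile m) : ℤ :=
  (t.count (Sum.inl i) : ℤ) - (t.count (Sum.inr i) : ℤ)

/-- The wheel graph on `n` vertices: the hub is `none`; the outer-cycle
vertices are `some i` for `i : Fin (n-1)`.  Edge `Sum.inl i` is the spoke from
the hub to `some i`; edge `Sum.inr i` is the outer-cycle edge from `some i` to
`some ((i+1) mod (n-1))`. -/
def wheel (n : ℕ) : Multigraph where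
  V := Option (Fin (n - 1))
  E := Fin (n - 1) ⊕ Fin (n - 1)
  ends e :=
    match e with
    | Sum.inl i => s((none : Option (Fin (n - 1))), some i)
    | Sum.inr i => s(some i,
        some ⟨(i.val + 1) % (n - 1), Nat.mod_lt _ (by have := i.isLt; omega)⟩)

/-- The cycle graph on `n` vertices (vertices `none, some 0, …, some (n-2)`,
edge `k` joining the `k`-th and `(k+1 mod n)`-th vertices in this order). -/
def cycleVtx (n : ℕ) (k : Fin n) : Option (Fin (n - 1)) :=
  if h : k.val = 0 then none else some ⟨k.val - 1, by have := k.isLt; omega⟩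

def cycleGraph (n : ℕ) : Multigraph where
  V := Option (Fin (n - 1))
  E := Fin n
  ends k := s(cycleVtx n k,
    cycleVtx n ⟨(k.val + 1) % n, Nat.mod_lt _ (by have := k.isLt; omega)⟩)
def Zc (k j i : ℕ) : ℚ :=
  if j = 0 then (if i = 0 then (2*k : ℚ) else 0)
  else if j = 1 then (if i = 0 then -1 else if i = 1 then 2 else 0)
  else if j ≤ k then (if i = 0 then -1 else if i = j - 1 then -1 else if i = j then 1 else 0)
  else (if i = 0 then -1 else if i = k then -2 else 0)

theorem hZ (n k : ℕ) (hk : 2 ≤ k) (hnk : n = 2 * k + 1)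
    (t : Fin (k + 2) → Tile (k + 1))
    (ht0 : t 0 = Multiset.replicate (n - 1) (Sum.inl ⟨0, Nat.succ_pos k⟩))
    (ht1 : t 1 = ({Sum.inr ⟨0, Nat.succ_pos k⟩, Sum.inl ⟨1, Nat.lt_succ_of_lt hk⟩,
      Sum.inl ⟨1, Nat.lt_succ_of_lt hk⟩} : Tile (k + 1)))
    (hti : ∀ (j : Fin (k + 2)) (h2 : 2 ≤ j.val) (hjk : j.val ≤ k),
      t j = ({Sum.inr ⟨0, Nat.succ_pos k⟩,
        Sum.inr ⟨j.val - 1, Nat.lt_of_le_of_lt (Nat.sub_le _ _) (Nat.lt_succ_of_le hjk)⟩,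
        Sum.inl ⟨j.val, Nat.lt_succ_of_le hjk⟩} : Tile (k + 1)))
    (htlast : t ⟨k + 1, Nat.lt_succ_self (k + 1)⟩ = ({Sum.inr ⟨0, Nat.succ_pos k⟩,
      Sum.inr ⟨k, Nat.lt_succ_self k⟩, Sum.inr ⟨k, Nat.lt_succ_self k⟩} : Tile (k + 1))) :
    ∀ (i : Fin (k+1)) (j : Fin (k+2)), (zval i (t j) : ℚ) = Zc k j.val i.val := by
  intro i j
  rcases i with ⟨iv, hi⟩
  rcases j with ⟨jv, hj⟩
  show _ = Zc k jv iv
  by_cases h0 : jv = 0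
  · subst h0
    have e : (⟨0, hj⟩ : Fin (k+2)) = 0 := by ext; simp
    rw [e, ht0, show n - 1 = 2 * k by omega]
    simp only [Zc, zval, Multiset.count_replicate, Sum.inl.injEq, Sum.inr.injEq,
      Fin.mk.injEq, if_true, eq_self_iff_true]
    split_ifs <;> push_cast <;> first | contradiction | (exfalso; omega) | norm_num | omega
  by_cases h1 : jv = 1
  · subst h1
    have e : (⟨1, hj⟩ : Fin (k+2)) = 1 := by ext; simp
    rw [e, ht1]
    simp only [Zc, zval, Multiset.insert_eq_cons, Multiset.count_cons, Multiset.count_singleton,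
      Sum.inl.injEq, Sum.inr.injEq, Fin.mk.injEq]
    split_ifs <;> push_cast <;> first | contradiction | (exfalso; omega) | norm_num | omega
  by_cases h2 : jv ≤ k
  · rw [hti ⟨jv, hj⟩ (show 2 ≤ jv by omega) (show jv ≤ k from h2)]
    simp only [Zc, zval, Multiset.insert_eq_cons, Multiset.count_cons, Multiset.count_singleton,
      Sum.inl.injEq, Sum.inr.injEq, Fin.mk.injEq]
    split_ifs <;> push_cast <;> first | contradiction | (exfalso; omega) | norm_num | omega
  · have e : (⟨jv, hj⟩ : Fin (k+2)) = ⟨k+1, by omega⟩ := by ext; simp; omega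
    have ejv : jv = k + 1 := by omega
    subst ejv
    rw [e, htlast]
    simp only [Zc, zval, Multiset.insert_eq_cons, Multiset.count_cons, Multiset.count_singleton,
      Sum.inl.injEq, Sum.inr.injEq, Fin.mk.injEq]
    split_ifs <;> push_cast <;> first | contradiction | (exfalso; omega) | norm_num | omega

lemma Zc_zero (k jv : ℕ) : Zc k jv 0 = if jv = 0 then (2*k:ℚ) else -1 := by
  unfold Zc; split_ifs <;> first | rfl | contradiction | (exfalso; omega) | norm_num

lemma Zc_AA (k iv : ℕ) (h1 : 1 ≤ iv) (h2 : iv ≤ k) :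
    Zc k iv iv = if iv = 1 then 2 else 1 := by
  unfold Zc; split_ifs <;> first | rfl | contradiction | (exfalso; omega) | norm_num

lemma Zc_BA (k iv : ℕ) (hk : 2 ≤ k) (h1 : 1 ≤ iv) (h2 : iv ≤ k) :
    Zc k (iv+1) iv = if iv = k then -2 else -1 := by
  unfold Zc; split_ifs <;> first | rfl | contradiction | (exfalso; omega) | norm_num

lemma Zc_off (k iv jv : ℕ) (hjv : jv < k + 2) (h1 : 1 ≤ iv) (h2 : iv ≤ k)
    (hA : jv ≠ iv) (hB : jv ≠ iv + 1) : Zc k jv iv = 0 := by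
  unfold Zc; split_ifs <;> first | rfl | contradiction | (exfalso; omega) | norm_num

lemma sum_split (k : ℕ) (hk : 2 ≤ k) (c d e : ℚ) :
    ∑ j : Fin (k+2), (if j.val = 0 then c else if 2 ≤ j.val ∧ j.val ≤ k then d else e)
      = c + ((k:ℚ)-1)*d + 2*e := by
  rw [Fin.sum_univ_eq_sum_range
    (fun jv => if jv = 0 then c else if 2 ≤ jv ∧ jv ≤ k then d else e)]
  have hpt : ∀ jv ∈ Finset.range (k+2),
      (if jv = 0 then c else if 2 ≤ jv ∧ jv ≤ k then d else e)
        = (if jv = 0 then c - e else 0) + ((if 2 ≤ jv ∧ jv ≤ k then d - e else 0) + e) := by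
    intro jv _; split_ifs <;> first | ring1 | contradiction | (exfalso; omega)
  rw [Finset.sum_congr rfl hpt, Finset.sum_add_distrib, Finset.sum_add_distrib]
  have h1 : ∑ jv ∈ Finset.range (k+2), (if jv = 0 then c - e else 0) = c - e := by
    rw [Finset.sum_ite_eq' (Finset.range (k+2)) 0 (fun _ => c - e)]
    simp
  have h2 : ∑ jv ∈ Finset.range (k+2), (if 2 ≤ jv ∧ jv ≤ k then d - e else 0)
      = ((k:ℚ)-1) * (d - e) := by
    rw [← Finset.sum_filter]
    have : (Finset.range (k+2)).filter (fun jv => 2 ≤ jv ∧ jv ≤ k) = Finset.Icc 2 k := by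
      ext x; simp [Finset.mem_range, Finset.mem_Icc]; omega
    rw [this, Finset.sum_const, Nat.card_Icc]
    have : ((k + 1 - 2 : ℕ) : ℚ) = (k:ℚ) - 1 := by
      have : k + 1 - 2 = k - 1 := by omega
      rw [this, Nat.cast_sub (by omega)]; norm_num
    rw [nsmul_eq_mul, this]
  rw [h1, h2, Finset.sum_const, Finset.card_range, nsmul_eq_mul]
  push_cast; ring

lemma eval_sum0 (k : ℕ) (r : Fin (k+2) → ℚ) :
    ∑ j, r j * Zc k j.val 0 = (2*(k:ℚ)+1) * r 0 - ∑ j, r j := by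
  have key : ∀ j : Fin (k+2), r j * Zc k j.val 0
      = (if j = 0 then (2*(k:ℚ)+1) * r 0 else 0) - r j := by
    intro j
    rw [Zc_zero]
    by_cases h : j = 0
    · subst h; rw [if_pos (show ((0 : Fin (k+2))).val = 0 by simp), if_pos rfl]; ring
    · have hv : j.val ≠ 0 := fun hh => h (Fin.ext hh)
      rw [if_neg hv, if_neg h]; ring
  rw [Finset.sum_congr rfl (fun j _ => key j), Finset.sum_sub_distrib,
    Finset.sum_ite_eq' Finset.univ (0 : Fin (k+2)) (fun _ => (2*(k:ℚ)+1) * r 0)]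
  simp

lemma eval_sumA (k : ℕ) (hk : 2 ≤ k) (iv : ℕ) (h1 : 1 ≤ iv) (h2 : iv ≤ k)
    (r : Fin (k+2) → ℚ) :
    ∑ j, r j * Zc k j.val iv
      = (if iv = 1 then 2 else 1) * r ⟨iv, by omega⟩
        + (if iv = k then -2 else -1) * r ⟨iv+1, by omega⟩ := by
  set A : Fin (k+2) := ⟨iv, by omega⟩ with hA
  set B : Fin (k+2) := ⟨iv+1, by omega⟩ with hB
  have hAB : A ≠ B := by
    intro h
    have := congrArg Fin.val h
    simp [hA, hB] at this
  have hzero : ∀ j ∈ (Finset.univ : Finset (Fin (k+2))), j ∉ ({A, B} : Finset (Fin (k+2))) →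
      r j * Zc k j.val iv = 0 := by
    intro j _ hj
    simp only [Finset.mem_insert, Finset.mem_singleton] at hj
    push_neg at hj
    rw [Zc_off k iv j.val j.isLt h1 h2 (fun h => hj.1 (Fin.ext h)) (fun h => hj.2 (Fin.ext h)),
      mul_zero]
  rw [← Finset.sum_subset (Finset.subset_univ {A, B}) hzero, Finset.sum_pair hAB]
  have e1 : r A * Zc k A.val iv = (if iv = 1 then 2 else 1) * r A := by
    show r A * Zc k iv iv = _
    rw [Zc_AA k iv h1 h2]; ring
  have e2 : r B * Zc k B.val iv = (if iv = k then -2 else -1) * r B := by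
    show r B * Zc k (iv+1) iv = _
    rw [Zc_BA k iv hk h1 h2]; ring
  rw [e1, e2]

theorem matrix_forward (n k : ℕ) (hk : 2 ≤ k) (hnk : n = 2*k+1) (r : Fin (k+2) → ℚ)
    (Heq : ∀ i : Fin (k+1), ∑ j, r j * Zc k j.val i.val = 0)
    (Hsum : ∑ j, r j = 1) :
    ∀ j : Fin (k+2), r j = if 2 ≤ j.val ∧ j.val ≤ k then 2/(n:ℚ) else 1/(n:ℚ) := by
  have hnq : (n:ℚ) = 2*(k:ℚ)+1 := by rw [hnk]; push_cast; ring
  have hn0 : (n:ℚ) ≠ 0 := by rw [hnq]; positivity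
  have h0 := Heq ⟨0, by omega⟩
  rw [show ((⟨0, by omega⟩ : Fin (k+1)) : Fin (k+1)).val = 0 from rfl,
    eval_sum0 k r, Hsum] at h0
  have hr0 : r 0 = 1/(n:ℚ) := by
    rw [hnq]; field_simp; linarith
  have chain : ∀ iv (h1 : 1 ≤ iv) (h2 : iv ≤ k),
      (if iv = 1 then (2:ℚ) else 1) * r ⟨iv, by omega⟩
        + (if iv = k then (-2:ℚ) else -1) * r ⟨iv+1, by omega⟩ = 0 := by
    intro iv h1 h2
    have h := Heq ⟨iv, by omega⟩
    rwa [show ((⟨iv, by omega⟩ : Fin (k+1)) : Fin (k+1)).val = iv from rfl,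
      eval_sumA k hk iv h1 h2 r] at h
  have h2r : r ⟨2, by omega⟩ = 2 * r 1 := by
    have hc := chain 1 le_rfl (by omega)
    rw [if_pos rfl, if_neg (by omega)] at hc
    have e1 : (⟨1, by omega⟩ : Fin (k+2)) = 1 := by ext; simp
    rw [e1] at hc
    have e2 : (⟨1+1, by omega⟩ : Fin (k+2)) = ⟨2, by omega⟩ := rfl
    rw [e2] at hc
    linarith
  have hmid : ∀ iv (h2 : 2 ≤ iv) (hik : iv ≤ k), r ⟨iv, by omega⟩ = 2 * r 1 := by
    intro iv h2
    induction iv, h2 using Nat.le_induction with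
    | base => intro _; exact h2r
    | succ m hm ih =>
      intro hik
      have hc := chain m (by omega) (by omega)
      rw [if_neg (by omega), if_neg (by omega)] at hc
      have hprev := ih (by omega)
      linarith [hprev, hc]
  have hlast : r ⟨k+1, by omega⟩ = r 1 := by
    have hc := chain k (by omega) (by omega)
    rw [if_neg (by omega), if_pos rfl] at hc
    have hprev := hmid k (by omega) le_rfl
    linarith [hprev, hc]
  have hr1 : r 1 = 1/(n:ℚ) := by
    have hpt : ∀ j ∈ (Finset.univ : Finset (Fin (k+2))), r j
        = (if j.val = 0 then r 0 else if 2 ≤ j.val ∧ j.val ≤ k then 2 * r 1 else r 1) := by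
      intro j _
      rcases j with ⟨jv, hj⟩
      by_cases hj0 : jv = 0
      · subst hj0
        rw [if_pos (show ((⟨0, hj⟩ : Fin (k+2))).val = 0 from rfl)]
        rw [show (⟨0, hj⟩ : Fin (k+2)) = 0 from by ext; simp]
      · by_cases hj1 : jv = 1
        · subst hj1
          rw [if_neg (show ¬((1:ℕ) = 0) by omega),
            if_neg (show ¬(2 ≤ (1:ℕ) ∧ (1:ℕ) ≤ k) by omega)]
          rw [show (⟨1, hj⟩ : Fin (k+2)) = 1 from by ext; simp]
        · by_cases hjk : jv ≤ k
          · rw [if_neg (show ¬(jv = 0) from hj0),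
              if_pos (show 2 ≤ jv ∧ jv ≤ k by omega)]
            exact hmid jv (by omega) hjk
          · have ejv : jv = k + 1 := by omega
            subst ejv
            rw [if_neg (show ¬(k+1 = 0) by omega),
              if_neg (show ¬(2 ≤ k+1 ∧ k+1 ≤ k) by omega)]
            exact hlast
    rw [Finset.sum_congr rfl hpt, sum_split k hk, hr0, hnq] at Hsum
    have hk0 : (2:ℚ) ≤ (k:ℚ) := by exact_mod_cast hk
    rw [hnq]
    have h2k : (2*(k:ℚ)+1) ≠ 0 := by positivity
    field_simp at Hsum ⊢
    nlinarith [Hsum]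
  intro j
  rcases j with ⟨jv, hj⟩
  by_cases hj0 : jv = 0
  · subst hj0
    rw [if_neg (show ¬(2 ≤ (0:ℕ) ∧ (0:ℕ) ≤ k) by omega)]
    rw [show (⟨0, hj⟩ : Fin (k+2)) = 0 from by ext; simp]
    exact hr0
  by_cases hj1 : jv = 1
  · subst hj1
    rw [if_neg (show ¬(2 ≤ (1:ℕ) ∧ (1:ℕ) ≤ k) by omega)]
    rw [show (⟨1, hj⟩ : Fin (k+2)) = 1 from by ext; simp]
    exact hr1
  by_cases hjk : jv ≤ k
  · rw [if_pos (show 2 ≤ jv ∧ jv ≤ k by omega)]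
    rw [hmid jv (by omega) hjk, hr1]
    ring
  · have ejv : jv = k + 1 := by omega
    subst ejv
    rw [if_neg (show ¬(2 ≤ k+1 ∧ k+1 ≤ k) by omega), hlast, hr1]

theorem backward_sum (n k : ℕ) (hk : 2 ≤ k) (hnk : n = 2*k+1) :
    ∑ j : Fin (k+2), (if 2 ≤ j.val ∧ j.val ≤ k then 2/(n:ℚ) else 1/(n:ℚ)) = 1 := by
  have hnq : (n:ℚ) = 2*(k:ℚ)+1 := by rw [hnk]; push_cast; ring
  have hn0 : (n:ℚ) ≠ 0 := by rw [hnq]; positivity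
  have hpt : ∀ j ∈ (Finset.univ : Finset (Fin (k+2))),
      (if 2 ≤ j.val ∧ j.val ≤ k then 2/(n:ℚ) else 1/(n:ℚ))
        = (if j.val = 0 then 1/(n:ℚ) else if 2 ≤ j.val ∧ j.val ≤ k then 2/(n:ℚ) else 1/(n:ℚ)) := by
    intro j _
    by_cases h : j.val = 0
    · rw [if_pos h, if_neg (by omega)]
    · rw [if_neg h]
  rw [Finset.sum_congr rfl hpt, sum_split k hk, hnq]
  have hk0 : (2:ℚ) ≤ (k:ℚ) := by exact_mod_cast hk
  field_simp
  ring

theorem backward_eq (n k : ℕ) (hk : 2 ≤ k) (hnk : n = 2*k+1) (i : Fin (k+1)) :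
    ∑ j : Fin (k+2), (if 2 ≤ j.val ∧ j.val ≤ k then 2/(n:ℚ) else 1/(n:ℚ)) * Zc k j.val i.val
      = 0 := by
  have hnq : (n:ℚ) = 2*(k:ℚ)+1 := by rw [hnk]; push_cast; ring
  have hn0 : (n:ℚ) ≠ 0 := by rw [hnq]; positivity
  set r : Fin (k+2) → ℚ := fun j => if 2 ≤ j.val ∧ j.val ≤ k then 2/(n:ℚ) else 1/(n:ℚ) with hr
  show ∑ j, r j * Zc k j.val i.val = 0
  rcases i with ⟨iv, hi⟩
  by_cases hi0 : iv = 0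
  · subst hi0
    rw [show ((⟨0, hi⟩ : Fin (k+1)) : Fin (k+1)).val = 0 from rfl, eval_sum0 k r]
    have hs : ∑ j, r j = 1 := backward_sum n k hk hnk
    rw [hs]
    have : r 0 = 1/(n:ℚ) := by
      rw [hr]
      simp only
      rw [if_neg (show ¬(2 ≤ (0:Fin (k+2)).val ∧ (0:Fin (k+2)).val ≤ k) by simp)]
    rw [this, hnq]
    field_simp
    norm_num
  · rw [show ((⟨iv, hi⟩ : Fin (k+1)) : Fin (k+1)).val = iv from rfl,
      eval_sumA k hk iv (by omega) (by omega) r]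
    have hA : r ⟨iv, by omega⟩ = if 2 ≤ iv ∧ iv ≤ k then 2/(n:ℚ) else 1/(n:ℚ) := rfl
    have hB : r ⟨iv+1, by omega⟩ = if 2 ≤ iv+1 ∧ iv+1 ≤ k then 2/(n:ℚ) else 1/(n:ℚ) := rfl
    rw [hA, hB]
    by_cases h1 : iv = 1
    · subst h1
      rw [if_pos rfl, if_neg (by omega), if_neg (by omega), if_pos (by omega)]
      ring
    · by_cases h2 : iv = k
      · subst h2
        rw [if_neg h1, if_pos rfl, if_pos (by omega), if_neg (by omega)]
        ring
      · rw [if_neg h1, if_neg h2, if_pos (by omega), if_pos (by omega)]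
        ring

lemma tileOf_sum {m : ℕ} {G : Multigraph} (A : Assembly m G) (v : G.V) :
    A.tileOf v = ∑ e : G.E,
      ((if (A.orient e).1 = v then {Sum.inl (A.label e)} else 0) +
       (if (A.orient e).2 = v then {Sum.inr (A.label e)} else 0)) := by
  rw [Finset.sum]
  rw [Assembly.tileOf, Multiset.bind, Multiset.join]

def zhom {m : ℕ} (i : Fin m) : Multiset (Fin m ⊕ Fin m) →+ ℤ :=
  (Nat.castAddMonoidHom ℤ).comp (Multiset.countAddMonoidHom (Sum.inl i))
    - (Nat.castAddMonoidHom ℤ).comp (Multiset.countAddMonoidHom (Sum.inr i))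

lemma zval_eq_zhom {m : ℕ} (i : Fin m) (t : Tile m) : zval i t = zhom i t := rfl

example (k : ℕ) (a : Fin (k+1) ⊕ Fin (k+1)) (n : ℕ) :
    (n • ({a} : Tile (k+1))) = Multiset.replicate n a := by
  rw [Multiset.nsmul_singleton]

lemma sum_two {α : Type*} [DecidableEq α] (N p q : ℕ) (hp : p < N) (hq : q < N) (hpq : p ≠ q)
    (m1 m2 : Multiset α) :
    ∑ i : Fin N, (if i.val = p then m1 else if i.val = q then m2 else 0) = m1 + m2 := by
  have hzero : ∀ j ∈ (Finset.univ : Finset (Fin N)),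
      j ∉ ({⟨p, hp⟩, ⟨q, hq⟩} : Finset (Fin N)) →
      (if j.val = p then m1 else if j.val = q then m2 else 0) = 0 := by
    intro j _ hj
    simp only [Finset.mem_insert, Finset.mem_singleton] at hj
    push_neg at hj
    rw [if_neg (fun h => hj.1 (Fin.ext h)), if_neg (fun h => hj.2 (Fin.ext h))]
  rw [← Finset.sum_subset (Finset.subset_univ {⟨p, hp⟩, ⟨q, hq⟩}) hzero,
    Finset.sum_pair (by simp [Fin.ext_iff]; omega)]
  rw [if_pos rfl, if_neg (by simpa using hpq.symm), if_pos rfl]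

lemma sum_one {α : Type*} (N p : ℕ) (hp : p < N) (m1 : Multiset α) :
    ∑ i : Fin N, (if i.val = p then m1 else 0) = m1 := by
  have : ∀ i : Fin N, (if i.val = p then m1 else 0) = if i = ⟨p, hp⟩ then m1 else 0 := by
    intro i; congr 1; simp [Fin.ext_iff]
  rw [Finset.sum_congr rfl (fun i _ => this i)]
  simp

def oddOrient (k : ℕ) : (Fin (2*k) ⊕ Fin (2*k)) → (Option (Fin (2*k)) × Option (Fin (2*k)))
  | Sum.inl i => (none, some i)
  | Sum.inr i =>
      if i.val < k then (some i, some ⟨(i.val+1) % (2*k), Nat.mod_lt _ (by have := i.isLt; omega)⟩)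
      else (some ⟨(i.val+1) % (2*k), Nat.mod_lt _ (by have := i.isLt; omega)⟩, some i)

def oddLabel (k : ℕ) : (Fin (2*k) ⊕ Fin (2*k)) → Fin (k+1)
  | Sum.inl _ => ⟨0, by omega⟩
  | Sum.inr i =>
      if h : i.val < k then ⟨i.val+1, by omega⟩ else ⟨2*k - i.val, by have := i.isLt; omega⟩

def oddG (k : ℕ) : Multigraph where
  V := Option (Fin (2*k))
  E := Fin (2*k) ⊕ Fin (2*k)
  ends e := s((oddOrient k e).1, (oddOrient k e).2)

def oddA (k : ℕ) : Assembly (k+1) (oddG k) where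
  orient := oddOrient k
  label := oddLabel k
  orient_ends e := rfl

lemma oddG_order (k : ℕ) : Fintype.card (oddG k).V = 2*k+1 := by
  show Fintype.card (Option (Fin (2*k))) = 2*k+1
  simp

lemma tile_none (k : ℕ) (hk : 2 ≤ k) :
    (oddA k).tileOf none = Multiset.replicate (2*k) (Sum.inl (⟨0, by omega⟩ : Fin (k+1))) := by
  refine (tileOf_sum _ _).trans ?_
  show (∑ e : Fin (2*k) ⊕ Fin (2*k), ((if (oddOrient k e).1 = none then ({Sum.inl (oddLabel k e)} : Tile (k+1)) else 0) +
    (if (oddOrient k e).2 = none then ({Sum.inr (oddLabel k e)} : Tile (k+1)) else 0))) = _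
  refine Eq.trans (Fintype.sum_sum_type _) ?_
  have h1 : ∀ i : Fin (2*k),
      ((if (oddOrient k (Sum.inl i)).1 = none then ({Sum.inl (oddLabel k (Sum.inl i))} : Tile (k+1)) else 0) +
       (if (oddOrient k (Sum.inl i)).2 = none then {Sum.inr (oddLabel k (Sum.inl i))} else 0))
      = ({Sum.inl (⟨0, by omega⟩ : Fin (k+1))} : Tile (k+1)) := by
    intro i
    show ((if (none : Option (Fin (2*k))) = none then _ else _) + (if some i = none then _ else _)) = _
    rw [if_pos rfl, if_neg (by simp)]
    rw [add_zero]
    rfl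
  have h2 : ∀ i : Fin (2*k),
      ((if (oddOrient k (Sum.inr i)).1 = none then ({Sum.inl (oddLabel k (Sum.inr i))} : Tile (k+1)) else 0) +
       (if (oddOrient k (Sum.inr i)).2 = none then {Sum.inr (oddLabel k (Sum.inr i))} else 0))
      = (0 : Tile (k+1)) := by
    intro i
    show ((if (oddOrient k (Sum.inr i)).1 = none then _ else _) + (if (oddOrient k (Sum.inr i)).2 = none then _ else _)) = _
    rw [oddOrient]
    by_cases h : i.val < k
    · rw [if_pos h, if_neg (by simp), if_neg (by simp), add_zero]
    · rw [if_neg h, if_neg (by simp), if_neg (by simp), add_zero]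
  rw [Finset.sum_congr rfl (fun i _ => h1 i), Finset.sum_congr rfl (fun i _ => h2 i)]
  simp [Multiset.nsmul_singleton]

lemma spoke_sum (k : ℕ) (hk : 2 ≤ k) (w : Fin (2*k)) :
    ∑ i : Fin (2*k),
      ((if (oddOrient k (Sum.inl i)).1 = some w then ({Sum.inl (oddLabel k (Sum.inl i))} : Tile (k+1)) else 0) +
       (if (oddOrient k (Sum.inl i)).2 = some w then {Sum.inr (oddLabel k (Sum.inl i))} else 0))
    = {Sum.inr (⟨0, by omega⟩ : Fin (k+1))} := by
  have hpt : ∀ i : Fin (2*k),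
      ((if (oddOrient k (Sum.inl i)).1 = some w then ({Sum.inl (oddLabel k (Sum.inl i))} : Tile (k+1)) else 0) +
       (if (oddOrient k (Sum.inl i)).2 = some w then {Sum.inr (oddLabel k (Sum.inl i))} else 0))
      = (if i.val = w.val then ({Sum.inr (⟨0, by omega⟩ : Fin (k+1))} : Tile (k+1)) else 0) := by
    intro i
    show ((if (none : Option (Fin (2*k))) = some w then ({Sum.inl (⟨0, by omega⟩ : Fin (k+1))} : Tile (k+1)) else 0) +
      (if some i = some w then ({Sum.inr (⟨0, by omega⟩ : Fin (k+1))} : Tile (k+1)) else 0)) = _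
    rw [if_neg (by simp), zero_add]
    simp only [Option.some.injEq, Fin.ext_iff]
  rw [Finset.sum_congr rfl (fun i _ => hpt i)]
  exact sum_one (2*k) w.val w.isLt _

lemma tile_some (k : ℕ) (hk : 2 ≤ k) (w : Fin (2*k)) (p q : ℕ) (hp : p < 2*k) (hq : q < 2*k)
    (hpq : p ≠ q) (m1 m2 : Tile (k+1))
    (hpt : ∀ i : Fin (2*k),
      ((if (oddOrient k (Sum.inr i)).1 = some w then ({Sum.inl (oddLabel k (Sum.inr i))} : Tile (k+1)) else 0) +
       (if (oddOrient k (Sum.inr i)).2 = some w then {Sum.inr (oddLabel k (Sum.inr i))} else 0))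
      = (if i.val = p then m1 else if i.val = q then m2 else 0)) :
    (oddA k).tileOf (some w) = {Sum.inr (⟨0, by omega⟩ : Fin (k+1))} + (m1 + m2) := by
  refine (tileOf_sum _ _).trans ?_
  show (∑ e : Fin (2*k) ⊕ Fin (2*k), ((if (oddOrient k e).1 = some w then ({Sum.inl (oddLabel k e)} : Tile (k+1)) else 0) +
    (if (oddOrient k e).2 = some w then ({Sum.inr (oddLabel k e)} : Tile (k+1)) else 0))) = _
  refine Eq.trans (Fintype.sum_sum_type _) ?_
  rw [show (∑ i : Fin (2*k),
      ((if (oddOrient k (Sum.inl i)).1 = some w then ({Sum.inl (oddLabel k (Sum.inl i))} : Tile (k+1)) else 0) +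
       (if (oddOrient k (Sum.inl i)).2 = some w then ({Sum.inr (oddLabel k (Sum.inl i))} : Tile (k+1)) else 0)))
      = {Sum.inr (⟨0, by omega⟩ : Fin (k+1))} from spoke_sum k hk w]
  have h2 : (∑ i : Fin (2*k),
      ((if (oddOrient k (Sum.inr i)).1 = some w then ({Sum.inl (oddLabel k (Sum.inr i))} : Tile (k+1)) else 0) +
       (if (oddOrient k (Sum.inr i)).2 = some w then {Sum.inr (oddLabel k (Sum.inr i))} else 0)))
      = m1 + m2 :=
    (Finset.sum_congr rfl (fun i _ => hpt i)).trans (sum_two (2*k) p q hp hq hpq m1 m2)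
  rw [h2]

example (k : ℕ) (a b c : Fin (k+1) ⊕ Fin (k+1)) :
    ({a} : Tile (k+1)) + ({b} + {c}) = ({a, b, c} : Tile (k+1)) := rfl

lemma succ_mod (k : ℕ) (i : Fin (2*k)) :
    (i.val+1) % (2*k) = if i.val+1 = 2*k then 0 else i.val+1 := by
  have := i.isLt
  split_ifs with h
  · rw [h, Nat.mod_self]
  · exact Nat.mod_eq_of_lt (by omega)

lemma tile_v0 (k : ℕ) (hk : 2 ≤ k) (w : Fin (2*k)) (hw : w.val = 0) :
    (oddA k).tileOf (some w)
      = ({Sum.inr ⟨0, by omega⟩, Sum.inl ⟨1, by omega⟩, Sum.inl ⟨1, by omega⟩} : Tile (k+1)) := by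
  have hpt : ∀ i : Fin (2*k),
      ((if (oddOrient k (Sum.inr i)).1 = some w then ({Sum.inl (oddLabel k (Sum.inr i))} : Tile (k+1)) else 0) +
       (if (oddOrient k (Sum.inr i)).2 = some w then {Sum.inr (oddLabel k (Sum.inr i))} else 0))
      = (if i.val = 0 then ({Sum.inl ⟨1, by omega⟩} : Tile (k+1))
          else if i.val = 2*k-1 then ({Sum.inl ⟨1, by omega⟩} : Tile (k+1)) else 0) := by
    intro i
    simp only [oddOrient, oddLabel]
    by_cases hik : i.val < k
    · simp only [if_pos hik, dif_pos hik, Option.some.injEq, Fin.ext_iff, succ_mod]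
      split_ifs <;> first | (exfalso; omega) | (simp [Fin.ext_iff]; omega) | simp
    · simp only [if_neg hik, dif_neg hik, Option.some.injEq, Fin.ext_iff, succ_mod]
      split_ifs <;> first | (exfalso; omega) | (simp [Fin.ext_iff]; omega) | simp
  exact tile_some k hk w 0 (2*k-1) (by omega) (by omega) (by omega) _ _ hpt

lemma tile_vmid (k : ℕ) (hk : 2 ≤ k) (w : Fin (2*k)) (hw1 : 1 ≤ w.val) (hw2 : w.val ≤ k-1) :
    (oddA k).tileOf (some w)
      = ({Sum.inr ⟨0, by omega⟩, Sum.inr ⟨w.val, by omega⟩,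
          Sum.inl ⟨w.val+1, by omega⟩} : Tile (k+1)) := by
  have hpt : ∀ i : Fin (2*k),
      ((if (oddOrient k (Sum.inr i)).1 = some w then ({Sum.inl (oddLabel k (Sum.inr i))} : Tile (k+1)) else 0) +
       (if (oddOrient k (Sum.inr i)).2 = some w then {Sum.inr (oddLabel k (Sum.inr i))} else 0))
      = (if i.val = w.val-1 then ({Sum.inr ⟨w.val, by omega⟩} : Tile (k+1))
          else if i.val = w.val then ({Sum.inl ⟨w.val+1, by omega⟩} : Tile (k+1)) else 0) := by
    intro i
    simp only [oddOrient, oddLabel]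
    by_cases hik : i.val < k
    · simp only [if_pos hik, dif_pos hik, Option.some.injEq, Fin.ext_iff, succ_mod]
      split_ifs <;> first | (exfalso; omega) | (simp [Fin.ext_iff]; omega) | simp
    · simp only [if_neg hik, dif_neg hik, Option.some.injEq, Fin.ext_iff, succ_mod]
      split_ifs <;> first | (exfalso; omega) | (simp [Fin.ext_iff]; omega) | simp
  exact tile_some k hk w (w.val-1) w.val (by omega) (by omega) (by omega) _ _ hpt

lemma tile_vk (k : ℕ) (hk : 2 ≤ k) (w : Fin (2*k)) (hw : w.val = k) :
    (oddA k).tileOf (some w)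
      = ({Sum.inr ⟨0, by omega⟩, Sum.inr ⟨k, by omega⟩, Sum.inr ⟨k, by omega⟩} : Tile (k+1)) := by
  have hpt : ∀ i : Fin (2*k),
      ((if (oddOrient k (Sum.inr i)).1 = some w then ({Sum.inl (oddLabel k (Sum.inr i))} : Tile (k+1)) else 0) +
       (if (oddOrient k (Sum.inr i)).2 = some w then {Sum.inr (oddLabel k (Sum.inr i))} else 0))
      = (if i.val = k-1 then ({Sum.inr ⟨k, by omega⟩} : Tile (k+1))
          else if i.val = k then ({Sum.inr ⟨k, by omega⟩} : Tile (k+1)) else 0) := by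
    intro i
    simp only [oddOrient, oddLabel]
    by_cases hik : i.val < k
    · simp only [if_pos hik, dif_pos hik, Option.some.injEq, Fin.ext_iff, succ_mod]
      split_ifs <;> first | (exfalso; omega) | (simp [Fin.ext_iff]; omega) | simp
    · simp only [if_neg hik, dif_neg hik, Option.some.injEq, Fin.ext_iff, succ_mod]
      split_ifs <;> first | (exfalso; omega) | (simp [Fin.ext_iff]; omega) | simp
  exact tile_some k hk w (k-1) k (by omega) (by omega) (by omega) _ _ hpt

lemma tile_vhigh (k : ℕ) (hk : 2 ≤ k) (w : Fin (2*k)) (hw1 : k+1 ≤ w.val) :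
    (oddA k).tileOf (some w)
      = ({Sum.inr ⟨0, by omega⟩, Sum.inr ⟨2*k-w.val, by have := w.isLt; omega⟩,
          Sum.inl ⟨2*k-w.val+1, by have := w.isLt; omega⟩} : Tile (k+1)) := by
  have hw2 := w.isLt
  have hpt : ∀ i : Fin (2*k),
      ((if (oddOrient k (Sum.inr i)).1 = some w then ({Sum.inl (oddLabel k (Sum.inr i))} : Tile (k+1)) else 0) +
       (if (oddOrient k (Sum.inr i)).2 = some w then {Sum.inr (oddLabel k (Sum.inr i))} else 0))
      = (if i.val = w.val then ({Sum.inr ⟨2*k-w.val, by omega⟩} : Tile (k+1))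
          else if i.val = w.val-1 then ({Sum.inl ⟨2*k-w.val+1, by omega⟩} : Tile (k+1)) else 0) := by
    intro i
    simp only [oddOrient, oddLabel]
    by_cases hik : i.val < k
    · simp only [if_pos hik, dif_pos hik, Option.some.injEq, Fin.ext_iff, succ_mod]
      split_ifs <;> first | (exfalso; omega) | (simp [Fin.ext_iff]; omega) | simp
    · simp only [if_neg hik, dif_neg hik, Option.some.injEq, Fin.ext_iff, succ_mod]
      split_ifs <;> first | (exfalso; omega) | (simp [Fin.ext_iff]; omega) | simp
  exact tile_some k hk w w.val (w.val-1) (by omega) (by omega) (by omega) _ _ hpt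

lemma zhom_inl {m : ℕ} (i a : Fin m) :
    zhom i ({Sum.inl a} : Tile m) = if a = i then 1 else 0 := by
  simp [zhom, Multiset.count_singleton, Sum.inl.injEq, eq_comm]

lemma zhom_inr {m : ℕ} (i a : Fin m) :
    zhom i ({Sum.inr a} : Tile m) = -(if a = i then 1 else 0) := by
  simp [zhom, Multiset.count_singleton, Sum.inr.injEq, eq_comm]

lemma assembly_zero {m : ℕ} {G : Multigraph} (A : Assembly m G) (i : Fin m) :
    ∑ v : G.V, (zval i (A.tileOf v) : ℤ) = 0 := by
  have hv : ∀ v : G.V, zval i (A.tileOf v)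
      = ∑ e : G.E, ((if (A.orient e).1 = v then (if A.label e = i then (1:ℤ) else 0) else 0)
          - (if (A.orient e).2 = v then (if A.label e = i then (1:ℤ) else 0) else 0)) := by
    intro v
    rw [zval_eq_zhom, tileOf_sum, map_sum]
    refine Finset.sum_congr rfl (fun e _ => ?_)
    rw [map_add]
    by_cases h1 : (A.orient e).1 = v <;> by_cases h2 : (A.orient e).2 = v <;>
      simp [h1, h2, zhom_inl, zhom_inr, sub_eq_add_neg]
  rw [Finset.sum_congr rfl (fun v _ => hv v), Finset.sum_comm]
  refine Finset.sum_eq_zero (fun e _ => ?_)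
  rw [Finset.sum_sub_distrib,
    Finset.sum_ite_eq Finset.univ (A.orient e).1 (fun _ => (if A.label e = i then (1:ℤ) else 0)),
    Finset.sum_ite_eq Finset.univ (A.orient e).2 (fun _ => (if A.label e = i then (1:ℤ) else 0))]
  simp


lemma odd_realizes (n k : ℕ) (hk : 2 ≤ k) (hnk : n = 2 * k + 1)
    (t : Fin (k + 2) → Tile (k + 1))
    (ht0 : t 0 = Multiset.replicate (n - 1) (Sum.inl ⟨0, Nat.succ_pos k⟩))
    (ht1 : t 1 = ({Sum.inr ⟨0, Nat.succ_pos k⟩, Sum.inl ⟨1, Nat.lt_succ_of_lt hk⟩,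
      Sum.inl ⟨1, Nat.lt_succ_of_lt hk⟩} : Tile (k + 1)))
    (hti : ∀ (j : Fin (k + 2)) (h2 : 2 ≤ j.val) (hjk : j.val ≤ k),
      t j = ({Sum.inr ⟨0, Nat.succ_pos k⟩,
        Sum.inr ⟨j.val - 1, Nat.lt_of_le_of_lt (Nat.sub_le _ _) (Nat.lt_succ_of_le hjk)⟩,
        Sum.inl ⟨j.val, Nat.lt_succ_of_le hjk⟩} : Tile (k + 1)))
    (htlast : t ⟨k + 1, Nat.lt_succ_self (k + 1)⟩ = ({Sum.inr ⟨0, Nat.succ_pos k⟩,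
      Sum.inr ⟨k, Nat.lt_succ_self k⟩, Sum.inr ⟨k, Nat.lt_succ_self k⟩} : Tile (k + 1))) :
    Realizes (Finset.image t Finset.univ) (oddG k) := by
  refine ⟨oddA k, fun v => Finset.mem_image.mpr ?_⟩
  match v with
  | none =>
      exact ⟨0, Finset.mem_univ _, by
        rw [ht0, show n - 1 = 2*k by omega]; exact (tile_none k hk).symm⟩
  | some w =>
      have hwlt := w.isLt
      by_cases h0 : w.val = 0
      · exact ⟨1, Finset.mem_univ _, by rw [ht1]; exact (tile_v0 k hk w h0).symm⟩
      · by_cases hmid : w.val ≤ k - 1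
        · refine ⟨⟨w.val + 1, by omega⟩, Finset.mem_univ _, ?_⟩
          rw [hti ⟨w.val + 1, by omega⟩ (show 2 ≤ w.val + 1 by omega)
            (show w.val + 1 ≤ k by omega)]
          exact (tile_vmid k hk w (by omega) hmid).symm
        · by_cases hwk : w.val = k
          · exact ⟨⟨k + 1, by omega⟩, Finset.mem_univ _, by
              rw [htlast]; exact (tile_vk k hk w hwk).symm⟩
          · refine ⟨⟨2*k - w.val + 1, by omega⟩, Finset.mem_univ _, ?_⟩
            rw [hti ⟨2*k - w.val + 1, by omega⟩ (show 2 ≤ 2*k - w.val + 1 by omega)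
              (show 2*k - w.val + 1 ≤ k by omega)]
            exact (tile_vhigh k hk w (by omega)).symm

lemma realized_ge (n k : ℕ) (hk : 2 ≤ k) (hnk : n = 2 * k + 1)
    (t : Fin (k + 2) → Tile (k + 1))
    (ht0 : t 0 = Multiset.replicate (n - 1) (Sum.inl ⟨0, Nat.succ_pos k⟩))
    (ht1 : t 1 = ({Sum.inr ⟨0, Nat.succ_pos k⟩, Sum.inl ⟨1, Nat.lt_succ_of_lt hk⟩,
      Sum.inl ⟨1, Nat.lt_succ_of_lt hk⟩} : Tile (k + 1)))
    (hti : ∀ (j : Fin (k + 2)) (h2 : 2 ≤ j.val) (hjk : j.val ≤ k),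
      t j = ({Sum.inr ⟨0, Nat.succ_pos k⟩,
        Sum.inr ⟨j.val - 1, Nat.lt_of_le_of_lt (Nat.sub_le _ _) (Nat.lt_succ_of_le hjk)⟩,
        Sum.inl ⟨j.val, Nat.lt_succ_of_le hjk⟩} : Tile (k + 1)))
    (htlast : t ⟨k + 1, Nat.lt_succ_self (k + 1)⟩ = ({Sum.inr ⟨0, Nat.succ_pos k⟩,
      Sum.inr ⟨k, Nat.lt_succ_self k⟩, Sum.inr ⟨k, Nat.lt_succ_self k⟩} : Tile (k + 1)))
    (G : Multigraph) (hG : Realizes (Finset.image t Finset.univ) G) :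
    n ≤ G.order := by
  classical
  obtain ⟨A, hA⟩ := hG
  have hZq := hZ n k hk hnk t ht0 ht1 hti htlast
  have hnq : (n:ℚ) = 2*(k:ℚ)+1 := by rw [hnk]; push_cast; ring
  have hn0 : (n:ℚ) ≠ 0 := by rw [hnq]; positivity
  have hchoice : ∀ v : G.V, ∃ j : Fin (k+2), A.tileOf v = t j := fun v => by
    obtain ⟨j, _, hj⟩ := Finset.mem_image.mp (hA v); exact ⟨j, hj.symm⟩
  choose f hf using hchoice
  set N := Fintype.card G.V with hNdef
  have hNpos : 0 < N := Fintype.card_pos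
  set c : Fin (k+2) → ℕ := fun j => (Finset.univ.filter (fun v => f v = j)).card with hc
  have hcount : ∀ (g : Fin (k+2) → ℚ),
      ∑ v : G.V, g (f v) = ∑ j : Fin (k+2), (c j : ℚ) * g j := by
    intro g
    rw [← Finset.sum_fiberwise Finset.univ f (fun v => g (f v))]
    refine Finset.sum_congr rfl (fun j _ => ?_)
    calc ∑ v ∈ Finset.univ.filter (fun v => f v = j), g (f v)
        = ∑ _v ∈ Finset.univ.filter (fun v => f v = j), g j :=
          Finset.sum_congr rfl (fun v hv => by rw [(Finset.mem_filter.mp hv).2])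
      _ = (c j : ℚ) * g j := by rw [Finset.sum_const, nsmul_eq_mul]
  have hNne : (N:ℚ) ≠ 0 := Nat.cast_ne_zero.mpr (by omega)
  have hsumN : ∑ j : Fin (k+2), (c j : ℚ) = N := by
    calc ∑ j : Fin (k+2), (c j:ℚ) = ∑ j : Fin (k+2), (c j:ℚ) * 1 := by simp
      _ = ∑ _v : G.V, (1:ℚ) := (hcount _).symm
      _ = N := by rw [Finset.sum_const, nsmul_eq_mul, mul_one, Finset.card_univ]
  set r : Fin (k+2) → ℚ := fun j => (c j : ℚ) / N with hr
  have hsum : ∑ j, r j = 1 := by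
    rw [hr, ← Finset.sum_div, hsumN, div_self hNne]
  have heq : ∀ i : Fin (k+1), ∑ j, r j * Zc k j.val i.val = 0 := by
    intro i
    have h1 : ∑ v : G.V, ((zval i (A.tileOf v) : ℤ) : ℚ)
        = ∑ j, (c j : ℚ) * Zc k j.val i.val := by
      rw [← hcount (fun j => Zc k j.val i.val)]
      exact Finset.sum_congr rfl (fun v _ => by rw [hf v, hZq i (f v)])
    have h2 : ∑ v : G.V, ((zval i (A.tileOf v) : ℤ) : ℚ) = 0 := by
      have h3 := assembly_zero A i
      calc ∑ v : G.V, ((zval i (A.tileOf v) : ℤ) : ℚ)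
          = ((∑ v : G.V, zval i (A.tileOf v) : ℤ) : ℚ) := by push_cast; rfl
        _ = 0 := by rw [h3]; rfl
    have h3 : ∑ j, (c j:ℚ) * Zc k j.val i.val = 0 := by rw [← h1, h2]
    calc ∑ j, r j * Zc k j.val i.val
        = ∑ j, ((c j:ℚ) * Zc k j.val i.val) / N :=
          Finset.sum_congr rfl (fun j _ => by rw [hr]; ring)
      _ = (∑ j, (c j:ℚ) * Zc k j.val i.val) / N := by rw [Finset.sum_div]
      _ = 0 := by rw [h3, zero_div]
  have hres := matrix_forward n k hk hnk r heq hsum 0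
  rw [if_neg (show ¬(2 ≤ (0 : Fin (k+2)).val ∧ (0 : Fin (k+2)).val ≤ k) by simp)] at hres
  have hcN : (c 0 : ℚ) * n = N := by
    rw [hr] at hres
    field_simp at hres
    linarith
  have hc0 : 1 ≤ c 0 := by
    by_contra h
    have : c 0 = 0 := by omega
    rw [this] at hcN
    simp at hcN
    exact hNne hcN.symm
  have hNn : c 0 * n = N := by exact_mod_cast hcN
  show n ≤ N
  nlinarith [hc0, hNn]


/-- For odd `n = 2k+1 ≥ 5`, the pot `P_odd` (with `k+1 = ⌊n/2⌋+1` bond-edge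
types and `k+2 = ⌊n/2⌋+2` tiles `t₁ = {a₁^{n-1}}`, `t₂ = {â₁, a₂, a₂}`,
`tᵢ = {â₁, â_{i-1}, aᵢ}` for `3 ≤ i ≤ ⌊n/2⌋+1`, and
`t_{⌊n/2⌋+2} = {â₁, â_{⌊n/2⌋+1}, â_{⌊n/2⌋+1}}`; here `0`-indexed) has
construction matrix with unique solution `(1/n, 1/n, 2/n, …, 2/n, 1/n)` (the
entry `2/n` in `1`-indexed coordinates `3` through `⌊n/2⌋+1`), and consequently
`m_{P_odd} = n`. -/
theorem scenario3_odd_pot_matrix (n k : ℕ) (hk : 2 ≤ k) (hnk : n = 2 * k + 1)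
    (t : Fin (k + 2) → Tile (k + 1))
    (ht0 : t 0 = Multiset.replicate (n - 1) (Sum.inl ⟨0, by omega⟩))
    (ht1 : t 1 = ({Sum.inr ⟨0, by omega⟩, Sum.inl ⟨1, by omega⟩,
      Sum.inl ⟨1, by omega⟩} : Tile (k + 1)))
    (hti : ∀ (j : Fin (k + 2)) (h2 : 2 ≤ j.val) (hjk : j.val ≤ k),
      t j = ({Sum.inr ⟨0, by omega⟩,
        Sum.inr ⟨j.val - 1, by have := j.isLt; omega⟩,
        Sum.inl ⟨j.val, by have := hjk; omega⟩} : Tile (k + 1)))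
    (htlast : t ⟨k + 1, by omega⟩ = ({Sum.inr ⟨0, by omega⟩,
      Sum.inr ⟨k, by omega⟩, Sum.inr ⟨k, by omega⟩} : Tile (k + 1))) :
    (∀ r : Fin (k + 2) → ℚ,
        ((∀ i : Fin (k + 1), ∑ j, r j * (zval i (t j) : ℚ) = 0) ∧ ∑ j, r j = 1) ↔
          ∀ j : Fin (k + 2), r j =
            if 2 ≤ j.val ∧ j.val ≤ k then 2 / (n : ℚ) else 1 / (n : ℚ)) ∧
    mP (Finset.image t Finset.univ) = n := by
  classical
  have hZq := hZ n k hk hnk t ht0 ht1 hti htlast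
  constructor
  · intro r
    constructor
    · rintro ⟨Heq, Hsum⟩
      have Heq' : ∀ i : Fin (k+1), ∑ j, r j * Zc k j.val i.val = 0 := by
        intro i
        calc ∑ j, r j * Zc k j.val i.val
            = ∑ j, r j * ((zval i (t j) : ℤ) : ℚ) :=
              Finset.sum_congr rfl (fun j _ => by rw [hZq i j])
          _ = 0 := Heq i
      exact matrix_forward n k hk hnk r Heq' Hsum
    · intro hr
      have hfun : r = fun j : Fin (k+2) =>
          if 2 ≤ j.val ∧ j.val ≤ k then 2/(n:ℚ) else 1/(n:ℚ) := funext hr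
      subst hfun
      constructor
      · intro i
        calc ∑ j : Fin (k+2), (if 2 ≤ j.val ∧ j.val ≤ k then 2/(n:ℚ) else 1/(n:ℚ))
                * ((zval i (t j) : ℤ) : ℚ)
            = ∑ j : Fin (k+2), (if 2 ≤ j.val ∧ j.val ≤ k then 2/(n:ℚ) else 1/(n:ℚ))
                * Zc k j.val i.val :=
              Finset.sum_congr rfl (fun j _ => by rw [hZq i j])
          _ = 0 := backward_eq n k hk hnk i
      · exact backward_sum n k hk hnk
  · have hmem : n ∈ {m | ∃ G ∈ CSet (Finset.image t Finset.univ), G.order = m} := by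
      refine ⟨oddG k, odd_realizes n k hk hnk t ht0 ht1 hti htlast, ?_⟩
      show Fintype.card (oddG k).V = n
      rw [oddG_order]; omega
    refine le_antisymm (Nat.sInf_le hmem) (le_csInf ⟨n, hmem⟩ ?_)
    rintro m ⟨G, hG, rfl⟩
    exact realized_ge n k hk hnk t ht0 ht1 hti htlast G hG
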